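/- The map π : spec R → X-spec R, P ↦ (P : X), satisfies: (a) π is continuous; (b) π maps π-stable closed subsets of spec R to closed subsets of X-spec R; (c) π is a topological quotient map, i.e., π is surjective and a subset V ⊆ X-spec R is closed if and only if π^{-1}(V) is closed in spec R. -/

import Mathlib

/-- An ideal (i.e. left ideal) of a not-necessarily-commutative ring is two-sided. -/
def IsTwoSidedI {R : Type*} [Ring R] (I : Ideal R) : Prop :=
  ∀ a ∈ I, ∀ r : R, a * r ∈ I

/-- A (two-sided) ideal `P` is prime: it is proper and `IJ ⊆ P` forces `I ⊆ P` or `J ⊆ P`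
for all two-sided ideals `I`, `J`. -/
def IsPrimeTS {R : Type*} [Ring R] (P : Ideal R) : Prop :=
  IsTwoSidedI P ∧ P ≠ ⊤ ∧
    ∀ I J : Ideal R, IsTwoSidedI I → IsTwoSidedI J →
      (∀ a ∈ I, ∀ b ∈ J, a * b ∈ P) → I ≤ P ∨ J ≤ P

/-- `J` is `X`-semiprime: an intersection of a collection of `X`-prime ideals. -/
def IsXSemiprime {R : Type*} [Ring R] (𝒳 : Set (Ideal R)) (J : Ideal R) : Prop :=
  ∃ T ⊆ 𝒳, J = sInf T


section Aux
variable {R : Type*} [Ring R]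

lemma sInf_twoSided (T : Set (Ideal R)) (h : ∀ Q ∈ T, IsTwoSidedI Q) :
    IsTwoSidedI (sInf T) := fun a haM r =>
  Submodule.mem_sInf.mpr fun Q hQ => h Q hQ a (Submodule.mem_sInf.mp haM Q hQ) r

lemma sup_twoSided {I A : Ideal R} (hI : IsTwoSidedI I) (hA : IsTwoSidedI A) :
    IsTwoSidedI (I ⊔ A) := by
  intro x hx r
  obtain ⟨i, hi, a, haA, rfl⟩ := Submodule.mem_sup.mp hx
  exact Submodule.mem_sup.mpr ⟨i * r, hI i hi r, a * r, hA a haA r, (add_mul i a r).symm⟩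

/-- pure products along a list of ideals -/
def PiProd : List (Ideal R) → R → Prop
  | [], x => x = 1
  | A :: l, x => ∃ a ∈ A, ∃ y, PiProd l y ∧ x = a * y

lemma piProd_append {L₁ L₂ : List (Ideal R)} {x : R} (h : PiProd (L₁ ++ L₂) x) :
    ∃ y z, PiProd L₁ y ∧ PiProd L₂ z ∧ x = y * z := by
  induction L₁ generalizing x with
  | nil => exact ⟨1, x, rfl, h, (one_mul x).symm⟩
  | cons A l ih =>
    obtain ⟨a, haA, w, hw, rfl⟩ := h
    obtain ⟨y, z, hy, hz, rfl⟩ := ih hw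
    exact ⟨a * y, z, ⟨a, haA, y, hy, rfl⟩, hz, (mul_assoc a y z).symm⟩

lemma piProd_mem {L : List (Ideal R)} (h2 : ∀ A ∈ L, IsTwoSidedI A)
    {A : Ideal R} (hA : A ∈ L) {x : R} (hx : PiProd L x) : x ∈ A := by
  induction L generalizing x with
  | nil => exact absurd hA List.not_mem_nil
  | cons B l ih =>
    obtain ⟨b, hb, y, hy, rfl⟩ := hx
    rcases List.mem_cons.mp hA with rfl | hA'
    · exact h2 A (List.mem_cons_self) b hb y
    · exact Ideal.mul_mem_left _ b (ih (fun C hC => h2 C (List.mem_cons_of_mem _ hC)) hA' hy)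

lemma piProd_mul_right {l : List (Ideal R)} (hne : l ≠ [])
    (h2 : ∀ A ∈ l, IsTwoSidedI A) {y : R} (h : PiProd l y) (r : R) : PiProd l (y * r) := by
  induction l generalizing y with
  | nil => exact absurd rfl hne
  | cons A l' ih =>
    obtain ⟨a, haA, y', hy', rfl⟩ := h
    rcases eq_or_ne l' [] with rfl | hl'
    · have hy1 : y' = 1 := hy'
      subst hy1
      exact ⟨a * r, h2 A (List.mem_cons_self) a haA r, 1, rfl, by simp [mul_one]⟩
    · exact ⟨a, haA, y' * r,
        ih hl' (fun C hC => h2 C (List.mem_cons_of_mem _ hC)) hy', mul_assoc a y' r⟩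

lemma span_piProd_twoSided {l : List (Ideal R)} (h2 : ∀ A ∈ l, IsTwoSidedI A) :
    IsTwoSidedI (Ideal.span {y : R | PiProd l y}) := by
  rcases eq_or_ne l [] with rfl | hne
  · have htop : Ideal.span {y : R | PiProd ([] : List (Ideal R)) y} = ⊤ :=
      (Ideal.eq_top_iff_one _).mpr (Ideal.subset_span rfl)
    rw [htop]; intro a _ r; trivial
  · intro a haM r
    refine Submodule.span_induction ?_ ?_ ?_ ?_ haM
    · intro y hy; exact Ideal.subset_span (piProd_mul_right hne h2 hy r)
    · simpa using (Ideal.span {y : R | PiProd l y}).zero_mem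
    · intro x y _ _ hx hy; rw [add_mul]; exact Submodule.add_mem _ hx hy
    · intro c x _ hx
      rw [smul_eq_mul, mul_assoc]
      exact Ideal.mul_mem_left _ c hx

lemma extract_prime {P : Ideal R} (hP : IsPrimeTS P) :
    ∀ L : List (Ideal R), (∀ A ∈ L, IsTwoSidedI A) →
      (∀ x, PiProd L x → x ∈ P) → ∃ A ∈ L, A ≤ P := by
  intro L
  induction L with
  | nil =>
    intro _ h
    exact absurd ((Ideal.eq_top_iff_one P).mpr (h 1 rfl)) hP.2.1
  | cons A l ih =>
    intro h2 hsub
    have hA2 : IsTwoSidedI A := h2 A (List.mem_cons_self)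
    have hl2 : ∀ B ∈ l, IsTwoSidedI B := fun B hB => h2 B (List.mem_cons_of_mem _ hB)
    set J := Ideal.span {y : R | PiProd l y} with hJdef
    have hJ2 : IsTwoSidedI J := span_piProd_twoSided hl2
    have key : ∀ b ∈ J, ∀ a ∈ A, a * b ∈ P := by
      intro b hb
      refine Submodule.span_induction ?_ ?_ ?_ ?_ hb
      · intro y hy a haA; exact hsub (a * y) ⟨a, haA, y, hy, rfl⟩
      · intro a _; rw [mul_zero]; exact P.zero_mem
      · intro x y _ _ hx hy a haA; rw [mul_add]; exact P.add_mem (hx a haA) (hy a haA)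
      · intro c x _ hx a haA
        have h1 : a * (c • x) = (a * c) * x := by rw [smul_eq_mul, mul_assoc]
        rw [h1]; exact hx (a * c) (hA2 a haA c)
    rcases hP.2.2 A J hA2 hJ2 (fun a haA b hbJ => key b hbJ a haA) with h | h
    · exact ⟨A, List.mem_cons_self, h⟩
    · obtain ⟨B, hBl, hBP⟩ := ih hl2 (fun x hx => h (Ideal.subset_span hx))
      exact ⟨B, List.mem_cons_of_mem _ hBl, hBP⟩

lemma exists_prime_list [IsNoetherianRing R] (I : Ideal R) :
    IsTwoSidedI I → I ≠ ⊤ →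
      ∃ L : List (Ideal R), (∀ P ∈ L, IsPrimeTS P ∧ I ≤ P) ∧ ∀ x, PiProd L x → x ∈ I := by
  induction I using IsNoetherian.induction with
  | hgt I ih =>
  intro hI2 hItop
  by_cases hp : IsPrimeTS I
  · refine ⟨[I], ?_, ?_⟩
    · intro P hP
      rcases List.mem_cons.mp hP with rfl | h
      · exact ⟨hp, le_rfl⟩
      · exact absurd h List.not_mem_nil
    · rintro x ⟨a, haI, y, hy, rfl⟩
      have hy1 : y = 1 := hy
      rw [hy1, mul_one]; exact haI
  · have h3 : ¬ ∀ A B : Ideal R, IsTwoSidedI A → IsTwoSidedI B →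
        (∀ a ∈ A, ∀ b ∈ B, a * b ∈ I) → A ≤ I ∨ B ≤ I := fun h => hp ⟨hI2, hItop, h⟩
    push_neg at h3
    obtain ⟨A, B, hA2, hB2, hAB, hnAI, hnBI⟩ := h3
    have hA'2 : IsTwoSidedI (I ⊔ A) := sup_twoSided hI2 hA2
    have hB'2 : IsTwoSidedI (I ⊔ B) := sup_twoSided hI2 hB2
    have hltA : I < I ⊔ A :=
      lt_of_le_of_ne le_sup_left (fun h => hnAI (le_sup_right.trans h.ge))
    have hltB : I < I ⊔ B :=
      lt_of_le_of_ne le_sup_left (fun h => hnBI (le_sup_right.trans h.ge))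
    have hA'top : I ⊔ A ≠ ⊤ := by
      intro h
      obtain ⟨i, hi, a, haA, hia⟩ := Submodule.mem_sup.mp
        (show (1 : R) ∈ I ⊔ A by rw [h]; trivial)
      refine hnBI (fun b hb => ?_)
      have hbe : b = i * b + a * b := by rw [← add_mul, hia, one_mul]
      rw [hbe]; exact I.add_mem (hI2 i hi b) (hAB a haA b hb)
    have hB'top : I ⊔ B ≠ ⊤ := by
      intro h
      obtain ⟨i, hi, b, hbB, hib⟩ := Submodule.mem_sup.mp
        (show (1 : R) ∈ I ⊔ B by rw [h]; trivial)
      refine hnAI (fun a haA => ?_)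
      have hae : a = a * i + a * b := by rw [← mul_add, hib, mul_one]
      rw [hae]; exact I.add_mem (Ideal.mul_mem_left I a hi) (hAB a haA b hbB)
    have hmul : ∀ x ∈ I ⊔ A, ∀ y ∈ I ⊔ B, x * y ∈ I := by
      intro x hx y hy
      obtain ⟨i, hi, a, haA, rfl⟩ := Submodule.mem_sup.mp hx
      obtain ⟨i', hi', b, hbB, rfl⟩ := Submodule.mem_sup.mp hy
      have he : (i + a) * (i' + b) = i * i' + i * b + (a * i' + a * b) := by
        rw [add_mul, mul_add, mul_add]
      rw [he]
      exact I.add_mem (I.add_mem (Ideal.mul_mem_left I i hi') (hI2 i hi b))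
        (I.add_mem (Ideal.mul_mem_left I a hi') (hAB a haA b hbB))
    obtain ⟨LA, hLA, hLAprod⟩ := ih (I ⊔ A) hltA hA'2 hA'top
    obtain ⟨LB, hLB, hLBprod⟩ := ih (I ⊔ B) hltB hB'2 hB'top
    refine ⟨LA ++ LB, ?_, ?_⟩
    · intro P hP
      rcases List.mem_append.mp hP with h | h
      · exact ⟨(hLA P h).1, le_sup_left.trans (hLA P h).2⟩
      · exact ⟨(hLB P h).1, le_sup_left.trans (hLB P h).2⟩
    · intro x hx
      obtain ⟨y, z, hy, hz, rfl⟩ := piProd_append hx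
      exact hmul y (hLAprod y hy) z (hLBprod z hz)

lemma exists_prime_above [IsNoetherianRing R] {I : Ideal R}
    (hI2 : IsTwoSidedI I) (hItop : I ≠ ⊤) : ∃ M, IsPrimeTS M ∧ I ≤ M := by
  have hwf : WellFounded ((· > ·) : Ideal R → Ideal R → Prop) :=
    (IsWellFounded.wf : WellFounded ((· > ·) : Ideal R → Ideal R → Prop))
  obtain ⟨M, hMS, hmax⟩ := hwf.has_min {M | IsTwoSidedI M ∧ M ≠ ⊤ ∧ I ≤ M}
    ⟨I, hI2, hItop, le_rfl⟩
  obtain ⟨hM2, hMtop, hIM⟩ := hMS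
  refine ⟨M, ⟨hM2, hMtop, ?_⟩, hIM⟩
  intro A B hA2 hB2 hAB
  by_contra hcon
  push_neg at hcon
  obtain ⟨hnA, hnB⟩ := hcon
  have hMA2 : IsTwoSidedI (M ⊔ A) := sup_twoSided hM2 hA2
  have hlt : M < M ⊔ A :=
    lt_of_le_of_ne le_sup_left (fun h => hnA (le_sup_right.trans h.ge))
  have htop : M ⊔ A = ⊤ := by
    by_contra h
    exact hmax (M ⊔ A) ⟨hMA2, h, hIM.trans le_sup_left⟩ hlt
  obtain ⟨m, hm, a, haA, hma⟩ := Submodule.mem_sup.mp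
    (show (1 : R) ∈ M ⊔ A by rw [htop]; trivial)
  refine hnB (fun b hb => ?_)
  have hbe : b = m * b + a * b := by rw [← add_mul, hma, one_mul]
  rw [hbe]; exact M.add_mem (hM2 m hm b) (hAB a haA b hb)

lemma sInf_chain_prime {c : Set (Ideal R)} (hc : IsChain (· ≤ ·) c)
    (hne : c.Nonempty) (hall : ∀ P ∈ c, IsPrimeTS P) : IsPrimeTS (sInf c) := by
  obtain ⟨P₁, hP₁⟩ := hne
  refine ⟨sInf_twoSided c (fun P h => (hall P h).1), ?_, ?_⟩
  · intro h
    exact (hall P₁ hP₁).2.1 (top_le_iff.mp (h ▸ sInf_le hP₁))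
  · intro A B hA2 hB2 hAB
    by_cases hcase : ∀ P ∈ c, A ≤ P
    · left; exact le_sInf hcase
    · push_neg at hcase
      obtain ⟨P₀, hP₀c, hnA⟩ := hcase
      right
      refine le_sInf (fun P hP => ?_)
      have hABP : ∀ a ∈ A, ∀ b ∈ B, a * b ∈ P :=
        fun a haA b hb => (sInf_le hP) (hAB a haA b hb)
      have hABP₀ : ∀ a ∈ A, ∀ b ∈ B, a * b ∈ P₀ :=
        fun a haA b hb => (sInf_le hP₀c) (hAB a haA b hb)
      rcases hc.total hP hP₀c with h | h
      · rcases (hall P hP).2.2 A B hA2 hB2 hABP with hAle | hBle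
        · exact absurd (hAle.trans h) hnA
        · exact hBle
      · rcases (hall P₀ hP₀c).2.2 A B hA2 hB2 hABP₀ with hAle | hBle
        · exact absurd hAle hnA
        · exact hBle.trans h

lemma exists_minimal_prime {I P₀ : Ideal R} (hI2 : IsTwoSidedI I)
    (hP₀ : IsPrimeTS P₀) (hIP : I ≤ P₀) :
    ∃ m, IsPrimeTS m ∧ I ≤ m ∧ m ≤ P₀ ∧
      ∀ P', IsPrimeTS P' → I ≤ P' → P' ≤ m → P' = m := by
  set s : Set (Ideal R)ᵒᵈ := {P | IsPrimeTS (OrderDual.ofDual P) ∧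
    I ≤ OrderDual.ofDual P ∧ OrderDual.ofDual P ≤ P₀} with hs
  have hzorn := zorn_le_nonempty₀ s ?_ (OrderDual.toDual P₀) ⟨hP₀, hIP, le_rfl⟩
  · obtain ⟨m, hP₀m, hmem, hmax⟩ := hzorn
    refine ⟨OrderDual.ofDual m, hmem.1, hmem.2.1, hP₀m, ?_⟩
    intro P' hP' hIP' hP'm
    exact le_antisymm hP'm (hmax (y := OrderDual.toDual P')
      ⟨hP', hIP', hP'm.trans hmem.2.2⟩ hP'm)
  · intro c hcs hchain y hy
    set c' : Set (Ideal R) := OrderDual.ofDual '' c with hc'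
    have hc'chain : IsChain (· ≤ ·) c' := by
      rintro _ ⟨p, hp, rfl⟩ _ ⟨p', hp', rfl⟩ hne
      rcases hchain hp hp' (fun h => hne (congrArg _ h)) with h | h
      · exact Or.inr h
      · exact Or.inl h
    have hc'ne : c'.Nonempty := ⟨OrderDual.ofDual y, y, hy, rfl⟩
    have hall : ∀ P ∈ c', IsPrimeTS P := by
      rintro _ ⟨p, hp, rfl⟩; exact (hcs hp).1
    refine ⟨OrderDual.toDual (sInf c'), ⟨sInf_chain_prime hc'chain hc'ne hall, ?_, ?_⟩, ?_⟩
    · exact le_sInf (by rintro _ ⟨p, hp, rfl⟩; exact (hcs hp).2.1)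
    · exact (sInf_le (show OrderDual.ofDual y ∈ c' from ⟨y, hy, rfl⟩)).trans (hcs hy).2.2
    · intro z hz
      exact sInf_le (show OrderDual.ofDual z ∈ c' from ⟨z, hz, rfl⟩)
end Aux

/-- Proposition 1.7: the map `π : spec R → X-spec R`, `P ↦ (P : X)`,
(a) is continuous, (b) maps `π`-stable closed sets to closed sets, and (c) is a
topological quotient map.  Closedness is expressed via Zariski closed sets:
a subset of `spec R` is closed iff it is `V(I)` for an ideal `I`, and a subset of
`X-spec R` is closed iff it is `V_X(I)` for an ideal `I`. -/
theorem stmt_2 {R : Type*} [Ring R] [IsNoetherianRing R] [IsNoetherianRing Rᵐᵒᵖ]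
    (𝒳 : Set (Ideal R)) (h𝒳ne : 𝒳.Nonempty)
    (h𝒳ts : ∀ Q ∈ 𝒳, IsTwoSidedI Q) (h𝒳proper : ∀ Q ∈ 𝒳, Q ≠ ⊤)
    (q : Ideal R → Ideal R)
    (ha : ∀ P : Ideal R, IsPrimeTS P →
      q P ∈ 𝒳 ∧ q P ≤ P ∧ ∀ J, IsXSemiprime 𝒳 J → J ≤ P → J ≤ q P)
    (hb : ∀ Q ∈ 𝒳, ∀ P : Ideal R, IsPrimeTS P → Q ≤ P →
      (∀ P', IsPrimeTS P' → Q ≤ P' → P' ≤ P → P' = P) → q P = Q) :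
    -- (a) π is continuous: the preimage of every closed set of X-spec R is closed
    (∀ I : Ideal R, IsTwoSidedI I → ∃ I' : Ideal R, IsTwoSidedI I' ∧
        {P | IsPrimeTS P ∧ I ≤ q P} = {P | IsPrimeTS P ∧ I' ≤ P}) ∧
    -- (b) π maps π-stable closed subsets of spec R to closed subsets of X-spec R
    (∀ U : Set (Ideal R),
        (∀ P : Ideal R, IsPrimeTS P → (∃ P' ∈ U, q P' = q P) → P ∈ U) →
        (∃ I : Ideal R, IsTwoSidedI I ∧ U = {P | IsPrimeTS P ∧ I ≤ P}) →
        ∃ I : Ideal R, IsTwoSidedI I ∧ q '' U = {Q | Q ∈ 𝒳 ∧ I ≤ Q}) ∧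
    -- (c) π is a topological quotient map: it is surjective and a subset of X-spec R
    -- is closed iff its preimage is closed in spec R
    (∀ Q ∈ 𝒳, ∃ P : Ideal R, IsPrimeTS P ∧ q P = Q) ∧
    (∀ V ⊆ 𝒳,
        (∃ I : Ideal R, IsTwoSidedI I ∧ V = {Q | Q ∈ 𝒳 ∧ I ≤ Q}) ↔
        (∃ I : Ideal R, IsTwoSidedI I ∧
          {P | IsPrimeTS P ∧ q P ∈ V} = {P | IsPrimeTS P ∧ I ≤ P})) := by
  have hq𝒳 : ∀ P, IsPrimeTS P → q P ∈ 𝒳 := fun P hP => (ha P hP).1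
  have hqle : ∀ P, IsPrimeTS P → q P ≤ P := fun P hP => (ha P hP).2.1
  have hsemi_single : ∀ Q ∈ 𝒳, IsXSemiprime 𝒳 Q := fun Q hQ =>
    ⟨{Q}, Set.singleton_subset_iff.mpr hQ, sInf_singleton.symm⟩
  have hqmono : ∀ Q ∈ 𝒳, ∀ P, IsPrimeTS P → Q ≤ P → Q ≤ q P :=
    fun Q hQ P hP h => (ha P hP).2.2 Q (hsemi_single Q hQ) h
  -- surjectivity below a given prime
  have hsurj : ∀ Q ∈ 𝒳, ∀ P₀, IsPrimeTS P₀ → Q ≤ P₀ →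
      ∃ m, IsPrimeTS m ∧ m ≤ P₀ ∧ q m = Q := by
    intro Q hQ P₀ hP₀ hQP
    obtain ⟨m, hm, hQm, hmP₀, hmin⟩ := exists_minimal_prime (h𝒳ts Q hQ) hP₀ hQP
    exact ⟨m, hm, hmP₀, hb Q hQ m hm hQm hmin⟩
  -- part (a), for all ideals I
  have parta : ∀ I : Ideal R, ∃ I' : Ideal R, IsTwoSidedI I' ∧
      {P | IsPrimeTS P ∧ I ≤ q P} = {P | IsPrimeTS P ∧ I' ≤ P} := by
    intro I
    refine ⟨sInf {Q | Q ∈ 𝒳 ∧ I ≤ Q}, sInf_twoSided _ (fun Q hQ => h𝒳ts Q hQ.1), ?_⟩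
    ext P
    simp only [Set.mem_setOf_eq]
    constructor
    · rintro ⟨hP, hIq⟩
      exact ⟨hP, (sInf_le (show q P ∈ {Q | Q ∈ 𝒳 ∧ I ≤ Q} from ⟨hq𝒳 P hP, hIq⟩)).trans (hqle P hP)⟩
    · rintro ⟨hP, hI'P⟩
      refine ⟨hP, ?_⟩
      have hsp : IsXSemiprime 𝒳 (sInf {Q | Q ∈ 𝒳 ∧ I ≤ Q}) :=
        ⟨{Q | Q ∈ 𝒳 ∧ I ≤ Q}, fun Q hQ => hQ.1, rfl⟩
      have h1 : sInf {Q | Q ∈ 𝒳 ∧ I ≤ Q} ≤ q P := (ha P hP).2.2 _ hsp hI'P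
      exact (le_sInf (fun Q hQ => hQ.2)).trans h1
  -- part (b)
  have partb : ∀ U : Set (Ideal R),
      (∀ P : Ideal R, IsPrimeTS P → (∃ P' ∈ U, q P' = q P) → P ∈ U) →
      (∃ I : Ideal R, IsTwoSidedI I ∧ U = {P | IsPrimeTS P ∧ I ≤ P}) →
      ∃ I : Ideal R, IsTwoSidedI I ∧ q '' U = {Q | Q ∈ 𝒳 ∧ I ≤ Q} := by
    rintro U hstab ⟨I₀, hI₀2, rfl⟩
    by_cases hI₀top : I₀ = ⊤
    · subst hI₀top
      refine ⟨⊤, fun a _ r => trivial, ?_⟩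
      ext Q
      simp only [Set.mem_image, Set.mem_setOf_eq]
      constructor
      · rintro ⟨P, ⟨hP, hle⟩, _⟩
        exact absurd (top_le_iff.mp hle) hP.2.1
      · rintro ⟨hQ, hle⟩
        exact absurd (top_le_iff.mp hle) (h𝒳proper Q hQ)
    · obtain ⟨L, hL, hLprod⟩ := exists_prime_list I₀ hI₀2 hI₀top
      refine ⟨sInf {Q | ∃ P ∈ L, q P = Q},
        sInf_twoSided _ (by rintro Q ⟨P, hPL, rfl⟩; exact h𝒳ts _ (hq𝒳 P (hL P hPL).1)), ?_⟩
      ext Q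
      simp only [Set.mem_image, Set.mem_setOf_eq]
      constructor
      · rintro ⟨P, ⟨hP, hI₀P⟩, rfl⟩
        obtain ⟨Pi, hPiL, hPiP⟩ := extract_prime hP L (fun A hA => (hL A hA).1.1)
          (fun x hx => hI₀P (hLprod x hx))
        have hPiprime := (hL Pi hPiL).1
        have hmono : q Pi ≤ q P := hqmono (q Pi) (hq𝒳 Pi hPiprime) P hP
          ((hqle Pi hPiprime).trans hPiP)
        exact ⟨hq𝒳 P hP, (sInf_le (show q Pi ∈ {Q | ∃ P ∈ L, q P = Q} from
          ⟨Pi, hPiL, rfl⟩)).trans hmono⟩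
      · rintro ⟨hQ𝒳, hIQ⟩
        obtain ⟨M, hM, hQM⟩ := exists_prime_above (h𝒳ts Q hQ𝒳) (h𝒳proper Q hQ𝒳)
        obtain ⟨m, hm, hmM, hqm⟩ := hsurj Q hQ𝒳 M hM hQM
        -- extract a q Pi below m
        have hL'2 : ∀ A ∈ L.map q, IsTwoSidedI A := by
          intro A hA
          obtain ⟨P, hPL, rfl⟩ := List.mem_map.mp hA
          exact h𝒳ts _ (hq𝒳 P (hL P hPL).1)
        have hprod' : ∀ x, PiProd (L.map q) x → x ∈ m := by
          intro x hx
          have hxI : x ∈ sInf {Q | ∃ P ∈ L, q P = Q} := Submodule.mem_sInf.mpr (by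
            rintro Q' ⟨P, hPL, rfl⟩
            exact piProd_mem hL'2 (List.mem_map.mpr ⟨P, hPL, rfl⟩) hx)
          exact (hqle m hm) (hqm ▸ (hIQ hxI))
        obtain ⟨A, hAL', hAm⟩ := extract_prime hm (L.map q) hL'2 hprod'
        obtain ⟨Pi, hPiL, rfl⟩ := List.mem_map.mp hAL'
        have hPiprime := (hL Pi hPiL).1
        obtain ⟨m', hm', hm'm, hqm'⟩ := hsurj (q Pi) (hq𝒳 Pi hPiprime) m hm hAm
        have hm'U : m' ∈ {P | IsPrimeTS P ∧ I₀ ≤ P} :=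
          hstab m' hm' ⟨Pi, ⟨hPiprime, (hL Pi hPiL).2⟩, hqm'.symm⟩
        exact ⟨m, ⟨hm, hm'U.2.trans hm'm⟩, hqm⟩
  -- global surjectivity
  have hsurj' : ∀ Q ∈ 𝒳, ∃ P : Ideal R, IsPrimeTS P ∧ q P = Q := by
    intro Q hQ
    obtain ⟨M, hM, hQM⟩ := exists_prime_above (h𝒳ts Q hQ) (h𝒳proper Q hQ)
    obtain ⟨m, hm, _, hqm⟩ := hsurj Q hQ M hM hQM
    exact ⟨m, hm, hqm⟩
  refine ⟨fun I _ => parta I, partb, hsurj', ?_⟩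
  intro V hV𝒳
  constructor
  · rintro ⟨I, hI2, rfl⟩
    obtain ⟨I', hI'2, heq⟩ := parta I
    refine ⟨I', hI'2, ?_⟩
    rw [← heq]
    ext P
    simp only [Set.mem_setOf_eq]
    exact ⟨fun ⟨hP, h⟩ => ⟨hP, h.2⟩, fun ⟨hP, h⟩ => ⟨hP, hq𝒳 P hP, h⟩⟩
  · rintro ⟨I, hI2, hpre⟩
    have hstab : ∀ P : Ideal R, IsPrimeTS P →
        (∃ P' ∈ {P | IsPrimeTS P ∧ q P ∈ V}, q P' = q P) →
        P ∈ {P | IsPrimeTS P ∧ q P ∈ V} := by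
      rintro P hP ⟨P', hP'U, hqq⟩
      exact ⟨hP, hqq ▸ hP'U.2⟩
    obtain ⟨I', hI'2, himg⟩ := partb {P | IsPrimeTS P ∧ q P ∈ V} hstab ⟨I, hI2, hpre⟩
    refine ⟨I', hI'2, ?_⟩
    have hVU : V = q '' {P | IsPrimeTS P ∧ q P ∈ V} := by
      ext Q
      constructor
      · intro hQV
        obtain ⟨m, hm, hqm⟩ := hsurj' Q (hV𝒳 hQV)
        exact ⟨m, ⟨hm, hqm ▸ hQV⟩, hqm⟩
      · rintro ⟨P, hPU, rfl⟩
        exact hPU.2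
    rw [hVU, himg]
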